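/- The family of inductive intervals on ℤ^d (with the standard polycycle structure) is a well-quasi-order under inclusion: every infinite sequence of inductive intervals contains an infinite subsequence that is increasing under set containment. -/

import Mathlib

/-- An interval of `ℤ` grazing `0`: one of `(-∞,-1]`, `[-m,-1]`, `∅`, `[1,m]`, `[1,∞)`. -/
def IsGrazing (I : Set ℤ) : Prop :=
  I = ∅ ∨ I = Set.Iic (-1) ∨ (∃ m : ℤ, I = Set.Icc (-m) (-1)) ∨
    (∃ m : ℤ, I = Set.Icc 1 m) ∨ I = Set.Ici 1

/-- The inductive interval of `ℤ^d` determined by the axis intervals `I`: all nonzero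
vectors `v` such that `v i ∈ I i` for the largest index `i` with `v i ≠ 0`. -/
def indInterval {d : ℕ} (I : Fin d → Set ℤ) : Set (Fin d → ℤ) :=
  {v | ∃ i : Fin d, v i ≠ 0 ∧ (∀ j : Fin d, i < j → v j = 0) ∧ v i ∈ I i}

/-- `C` is an inductive interval of `ℤ^d`. -/
def IsIndInterval {d : ℕ} (C : Set (Fin d → ℤ)) : Prop :=
  ∃ I : Fin d → Set ℤ, (∀ i, IsGrazing (I i)) ∧ C = indInterval I

/-- The set of integers encoded by a pair `(a, b)` of extended naturals:
negatives of absolute value at most `a`, and positives at most `b`. -/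
def grazeSet (p : ℕ∞ × ℕ∞) : Set ℤ :=
  {x : ℤ | x ≤ -1 ∧ ((-x).toNat : ℕ∞) ≤ p.1} ∪ {x : ℤ | 1 ≤ x ∧ ((x.toNat : ℕ∞)) ≤ p.2}

lemma grazeSet_mono {p q : ℕ∞ × ℕ∞} (h : p ≤ q) : grazeSet p ⊆ grazeSet q := by
  rintro x (⟨hx, hx'⟩ | ⟨hx, hx'⟩)
  · exact Or.inl ⟨hx, hx'.trans h.1⟩
  · exact Or.inr ⟨hx, hx'.trans h.2⟩

lemma exists_graze {I : Set ℤ} (h : IsGrazing I) : ∃ p : ℕ∞ × ℕ∞, I = grazeSet p := by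
  have hcast : ∀ a b : ℕ, ((a : ℕ∞) ≤ (b : ℕ∞)) ↔ a ≤ b := fun a b => Nat.cast_le
  rcases h with h | h | ⟨m, h⟩ | ⟨m, h⟩ | h
  · refine ⟨((0 : ℕ) , (0 : ℕ)), ?_⟩
    subst h
    ext x
    simp only [grazeSet, Set.mem_union, Set.mem_setOf_eq, Set.mem_empty_iff_false, false_iff]
    rintro (⟨hx, hx'⟩ | ⟨hx, hx'⟩) <;> rw [hcast] at hx' <;> omega
  · refine ⟨(⊤, (0 : ℕ)), ?_⟩
    subst h
    ext x
    simp only [grazeSet, Set.mem_union, Set.mem_setOf_eq, Set.mem_Iic, le_top, and_true]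
    constructor
    · intro hx; exact Or.inl hx
    · rintro (hx | ⟨hx, hx'⟩)
      · exact hx
      · rw [hcast] at hx'; omega
  · refine ⟨((m.toNat : ℕ), (0 : ℕ)), ?_⟩
    subst h
    ext x
    simp only [grazeSet, Set.mem_union, Set.mem_setOf_eq, Set.mem_Icc, hcast]
    omega
  · refine ⟨((0 : ℕ), (m.toNat : ℕ)), ?_⟩
    subst h
    ext x
    simp only [grazeSet, Set.mem_union, Set.mem_setOf_eq, Set.mem_Icc, hcast]
    omega
  · refine ⟨((0 : ℕ), ⊤), ?_⟩
    subst h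
    ext x
    simp only [grazeSet, Set.mem_union, Set.mem_setOf_eq, Set.mem_Ici, le_top, and_true, hcast]
    constructor
    · intro hx; exact Or.inr hx
    · rintro (⟨hx, hx'⟩ | hx)
      · omega
      · exact hx

instance : IsWellOrder ℕ∞ (· < ·) := ⟨⟩

lemma indInterval_mono {d : ℕ} {I J : Fin d → Set ℤ} (h : ∀ i, I i ⊆ J i) :
    indInterval I ⊆ indInterval J := by
  rintro v ⟨i, hv, hmax, hmem⟩
  exact ⟨i, hv, hmax, h i hmem⟩

/-- The family of inductive intervals on `ℤ^d` is a well-quasi-order under inclusion: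
every infinite sequence of inductive intervals contains an infinite subsequence that is
increasing under set containment. -/
theorem indInterval_wqo {d : ℕ} (C : ℕ → Set (Fin d → ℤ))
    (hC : ∀ n, IsIndInterval (C n)) :
    ∃ φ : ℕ → ℕ, StrictMono φ ∧ ∀ n, C (φ n) ⊆ C (φ (n + 1)) := by
  choose I hI hCI using hC
  choose p hp using fun n i => exists_graze (hI n i)
  -- encode as functions `Fin d × Bool → ℕ∞`
  set e : ℕ → (Fin d × Bool → ℕ∞) := fun n q => if q.2 then (p n q.1).1 else (p n q.1).2 with he
  obtain ⟨g, hg⟩ := (Set.isPWO_of_wellQuasiOrderedLE (Set.univ : Set (Fin d × Bool → ℕ∞))).exists_monotone_subseq (f := e)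
    (fun _ => Set.mem_univ _)
  refine ⟨fun n => g n, g.strictMono, fun n => ?_⟩
  rw [hCI, hCI]
  apply indInterval_mono
  intro i
  rw [hp, hp]
  apply grazeSet_mono
  have h1 := hg (show n ≤ n + 1 by omega) (i, true)
  have h2 := hg (show n ≤ n + 1 by omega) (i, false)
  simp only [he, Function.comp_apply, if_true, if_false] at h1 h2
  exact ⟨h1, h2⟩
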